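/- Let V be a finite set, G a simple graph on V with closed neighborhoods N_v, Π a partition of V with maximum disagreement φ(Π), and v ∈ V with |N_v| > 4·φ(Π). Then [v]_Π = {u ∈ V : |N_u ∩ N_v| > |N_v|/2}. -/
import Mathlib


open scoped symmDiff

open Finset

variable {V : Type*} [Fintype V] [DecidableEq V]

/-- Closed neighborhood of `v`: `v` together with its adjacent vertices. -/
def nbhd (G : SimpleGraph V) [DecidableRel G.Adj] (v : V) : Finset V :=
  insert v (G.neighborFinset v)

/-- `P` encodes a partition of `V`, where `P v` is the block containing `v`. -/
def IsPartitionFun (P : V → Finset V) : Prop :=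
  (∀ v, v ∈ P v) ∧ ∀ u v : V, u ∈ P v → P u = P v

/-- Maximum disagreement of the partition `P`. -/
def phi (G : SimpleGraph V) [DecidableRel G.Adj] (P : V → Finset V) : ℕ :=
  Finset.univ.sup fun v => ((P v) ∆ (nbhd G v)).card

lemma phi_bound1 (G : SimpleGraph V) [DecidableRel G.Adj] (P : V → Finset V) (w : V) :
    (P w \ nbhd G w).card ≤ phi G P := by
  have h := Finset.le_sup (f := fun w => ((P w) ∆ (nbhd G w)).card) (Finset.mem_univ w)
  refine le_trans (Finset.card_le_card ?_) h
  intro x hx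
  simp only [Finset.mem_sdiff, Finset.mem_symmDiff] at *
  tauto

lemma phi_bound2 (G : SimpleGraph V) [DecidableRel G.Adj] (P : V → Finset V) (w : V) :
    (nbhd G w \ P w).card ≤ phi G P := by
  have h := Finset.le_sup (f := fun w => ((P w) ∆ (nbhd G w)).card) (Finset.mem_univ w)
  refine le_trans (Finset.card_le_card ?_) h
  intro x hx
  simp only [Finset.mem_sdiff, Finset.mem_symmDiff] at *
  tauto

theorem statement6 (G : SimpleGraph V) [DecidableRel G.Adj]
    (P : V → Finset V) (hP : IsPartitionFun P) (v : V)
    (hv : 4 * phi G P < (nbhd G v).card) :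
    P v = Finset.univ.filter fun u => (nbhd G v).card < 2 * (nbhd G u ∩ nbhd G v).card := by
  ext u
  simp only [Finset.mem_filter, Finset.mem_univ, true_and]
  constructor
  · intro hu
    have hPuv : P u = P v := hP.2 u v hu
    have hsub : nbhd G v ⊆ (nbhd G u ∩ nbhd G v) ∪ ((nbhd G v \ P v) ∪ (P u \ nbhd G u)) := by
      intro x hx
      simp only [Finset.mem_union, Finset.mem_inter, Finset.mem_sdiff]
      by_cases hxP : x ∈ P v
      · by_cases hxN : x ∈ nbhd G u
        · exact Or.inl ⟨hxN, hx⟩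
        · exact Or.inr (Or.inr ⟨hPuv ▸ hxP, hxN⟩)
      · exact Or.inr (Or.inl ⟨hx, hxP⟩)
    have h1 := phi_bound2 G P v
    have h2 := phi_bound1 G P u
    have := Finset.card_le_card hsub
    have h3 := Finset.card_union_le (nbhd G u ∩ nbhd G v) ((nbhd G v \ P v) ∪ (P u \ nbhd G u))
    have h4 := Finset.card_union_le (nbhd G v \ P v) (P u \ nbhd G u)
    omega
  · intro hu
    by_contra hnot
    have hdisj : nbhd G u ∩ nbhd G v ⊆ (nbhd G u \ P u) ∪ (nbhd G v \ P v) := by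
      intro x hx
      simp only [Finset.mem_inter] at hx
      simp only [Finset.mem_union, Finset.mem_sdiff]
      by_cases h1 : x ∈ P u
      · by_cases h2 : x ∈ P v
        · exfalso
          have e1 := hP.2 x u h1
          have e2 := hP.2 x v h2
          exact hnot ((e1.symm.trans e2) ▸ hP.1 u)
        · exact Or.inr ⟨hx.2, h2⟩
      · exact Or.inl ⟨hx.1, h1⟩
    have h1 := phi_bound1 G P u
    have h2 := phi_bound2 G P v
    have h3 := phi_bound2 G P u
    have := Finset.card_le_card hdisj
    have h4 := Finset.card_union_le (nbhd G u \ P u) (nbhd G v \ P v)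
    omega
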